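/- arXiv:1205.3416 — 2 statements merged into one kernel-verified Lean document; each statement's English description precedes it below -/
import Mathlib

section
/- Let R be a finitely generated commutative graded F-algebra with R_0 = F. Then for every positive integer k, β_k(R) ≥ k·σ(R). -/
open scoped ENNReal


/-- `R_+`, the span of the homogeneous elements of positive degree. -/
noncomputable def gradePos {F R : Type*} [Field F] [CommRing R] [Algebra F R]
    (𝒜 : ℕ → Submodule F R) : Submodule F R :=
  ⨆ d ∈ Set.Ioi (0 : ℕ), 𝒜 d

/-- `β_k(R)`, the top degree of `R_+/R_+^{k+1}`:  the supremum (in `ℕ∞`) of the degrees `d`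
such that the degree `d` component of `R_+` is not contained in `R_+^{k+1}`. -/
noncomputable def gBeta {F R : Type*} [Field F] [CommRing R] [Algebra F R]
    (𝒜 : ℕ → Submodule F R) (k : ℕ) : ℕ∞ :=
  sSup ((fun d : ℕ => (d : ℕ∞)) '' {d | 0 < d ∧ ¬ 𝒜 d ≤ gradePos 𝒜 ^ (k + 1)})

/-- `F[R_{≤ d}]`, the subalgebra of `R` generated by the homogeneous elements
of degree at most `d`. -/
noncomputable def gBelow {F R : Type*} [Field F] [CommRing R] [Algebra F R]
    (𝒜 : ℕ → Submodule F R) (d : ℕ) : Subalgebra F R :=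
  Algebra.adjoin F (⋃ i ∈ Set.Iic d, (𝒜 i : Set R))

/-- `σ(R)`, the minimal `d` such that `R` is a finitely generated module over `F[R_{≤ d}]`. -/
noncomputable def gSigma {F R : Type*} [Field F] [CommRing R] [Algebra F R]
    (𝒜 : ℕ → Submodule F R) : ℕ :=
  sInf {d : ℕ | Module.Finite (gBelow 𝒜 d) R}

/-- `η(R) = β(R_+, F[R_{≤ σ(R)}])`, the top degree of `R_+` modulo `(F[R_{≤ σ(R)}])_+ ⬝ R_+`. -/
noncomputable def gEta {F R : Type*} [Field F] [CommRing R] [Algebra F R]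
    (𝒜 : ℕ → Submodule F R) : ℕ∞ :=
  sSup ((fun d : ℕ => (d : ℕ∞)) '' {d | 0 < d ∧
    ¬ 𝒜 d ≤ (Subalgebra.toSubmodule (gBelow 𝒜 (gSigma 𝒜)) ⊓ gradePos 𝒜) * gradePos 𝒜})


set_option linter.unusedSectionVars false

section aux

variable {F R : Type*} [Field F] [CommRing R] [Algebra F R]
variable (𝒜 : ℕ → Submodule F R) [GradedAlgebra 𝒜]

noncomputable def gProj (i : ℕ) : R →ₗ[F] R :=
  (𝒜 i).subtype ∘ₗ (DirectSum.component F ℕ (fun j => ↥(𝒜 j)) i) ∘ₗ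
    (DirectSum.decomposeLinearEquiv 𝒜).toLinearMap

lemma gProj_apply (i : ℕ) (x : R) : gProj 𝒜 i x = (DirectSum.decompose 𝒜 x i : R) := rfl

lemma gProj_mem (i : ℕ) (x : R) : gProj 𝒜 i x ∈ 𝒜 i := ((DirectSum.decompose 𝒜 x) i).2

lemma gProj_of_mem_same {i : ℕ} {x : R} (h : x ∈ 𝒜 i) : gProj 𝒜 i x = x :=
  DirectSum.decompose_of_mem_same 𝒜 h

lemma gProj_of_mem_ne {i j : ℕ} {x : R} (h : x ∈ 𝒜 j) (hne : j ≠ i) : gProj 𝒜 i x = 0 :=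
  DirectSum.decompose_of_mem_ne 𝒜 h hne

lemma map_gProj_le (i : ℕ) (M : Submodule F R) : M.map (gProj 𝒜 i) ≤ 𝒜 i := by
  rintro _ ⟨x, hx, rfl⟩; exact gProj_mem 𝒜 i x

lemma map_gProj_mul_le (d : ℕ) (M N : Submodule F R) :
    (M * N).map (gProj 𝒜 d) ≤
      ⨆ (p : ℕ × ℕ) (_ : p.1 + p.2 = d), M.map (gProj 𝒜 p.1) * N.map (gProj 𝒜 p.2) := by
  rw [Submodule.map_le_iff_le_comap]
  refine Submodule.mul_le.2 fun m hm n hn => ?_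
  simp only [Submodule.mem_comap]
  classical
  have hmul : gProj 𝒜 d (m * n) =
      ∑ ij ∈ ((DirectSum.decompose 𝒜 m).support ×ˢ (DirectSum.decompose 𝒜 n).support).filter
        (fun ij : ℕ × ℕ => ij.1 + ij.2 = d), gProj 𝒜 ij.1 m * gProj 𝒜 ij.2 n := by
    rw [gProj_apply, DirectSum.decompose_mul]
    exact DirectSum.coe_mul_apply 𝒜 _ _ d
  rw [hmul]
  refine Submodule.sum_mem _ fun ij hij => ?_
  rw [Finset.mem_filter] at hij
  refine Submodule.mem_iSup_of_mem ij (Submodule.mem_iSup_of_mem hij.2 ?_)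
  exact Submodule.mul_mem_mul (Submodule.mem_map_of_mem hm) (Submodule.mem_map_of_mem hn)

lemma A_le_gradePos {d : ℕ} (hd : 0 < d) : 𝒜 d ≤ gradePos 𝒜 :=
  le_iSup₂ (f := fun (d : ℕ) (_ : d ∈ Set.Ioi 0) => 𝒜 d) d hd

lemma gradePos_le_ker : gradePos 𝒜 ≤ LinearMap.ker (gProj 𝒜 0) := by
  refine iSup₂_le fun d hd => fun x hx => ?_
  simp only [LinearMap.mem_ker]
  exact gProj_of_mem_ne 𝒜 hx (Set.mem_Ioi.mp hd).ne'

lemma map_gProj_zero_gradePos : (gradePos 𝒜).map (gProj 𝒜 0) ≤ ⊥ := by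
  rw [Submodule.map_le_iff_le_comap]
  intro x hx
  simpa using gradePos_le_ker 𝒜 hx

lemma A_mul_A_le (i j : ℕ) : 𝒜 i * 𝒜 j ≤ 𝒜 (i + j) :=
  Submodule.mul_le.2 fun _ hx _ hy => SetLike.mul_mem_graded hx hy

end aux
section aux2

variable {F R : Type*} [Field F] [CommRing R] [Algebra F R]
variable (𝒜 : ℕ → Submodule F R) [GradedAlgebra 𝒜]

lemma map_gProj_pow_le (j a : ℕ) :
    (gradePos 𝒜 ^ (j + 1)).map (gProj 𝒜 a) ≤ 𝒜 a ⊓ gradePos 𝒜 ^ (j + 1) := by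
  induction j generalizing a with
  | zero =>
    rw [pow_one]
    refine le_inf (map_gProj_le 𝒜 a _) ?_
    rcases Nat.eq_zero_or_pos a with rfl | ha
    · exact le_trans (map_gProj_zero_gradePos 𝒜) bot_le
    · exact le_trans (map_gProj_le 𝒜 a _) (A_le_gradePos 𝒜 ha)
  | succ j ih =>
    have hpow : gradePos 𝒜 ^ (j + 2) = gradePos 𝒜 ^ (j + 1) * gradePos 𝒜 := pow_succ _ _
    rw [hpow]
    refine le_trans (map_gProj_mul_le 𝒜 a _ _) (iSup_le fun p => iSup_le fun hp => ?_)
    rcases Nat.eq_zero_or_pos p.2 with h2 | h2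
    · have hb : (gradePos 𝒜).map (gProj 𝒜 p.2) ≤ ⊥ := h2 ▸ map_gProj_zero_gradePos 𝒜
      refine le_trans (mul_le_mul' le_top hb) ?_
      rw [Submodule.mul_bot]
      exact bot_le
    · refine le_trans (mul_le_mul' (ih p.1)
        (le_inf (map_gProj_le 𝒜 p.2 _) (le_trans (map_gProj_le 𝒜 p.2 _) (A_le_gradePos 𝒜 h2)))) (le_inf ?_ ?_)
      · refine le_trans (mul_le_mul' inf_le_left inf_le_left) ?_
        exact hp ▸ A_mul_A_le 𝒜 p.1 p.2
      · exact le_trans (mul_le_mul' inf_le_right inf_le_right) le_rfl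

/-- The ideal generated by homogeneous elements of degree in `(0, s)`. -/
noncomputable def gIdeal (s : ℕ) : Submodule F R :=
  (⨆ i ∈ Set.Ioo 0 s, 𝒜 i) * ⊤

lemma mul_gIdeal_le (s : ℕ) (M : Submodule F R) : gIdeal 𝒜 s * M ≤ gIdeal 𝒜 s := by
  rw [gIdeal, mul_assoc]
  exact mul_le_mul' le_rfl le_top

lemma A_le_gIdeal {s i : ℕ} (h0 : 0 < i) (hs : i < s) : 𝒜 i ≤ gIdeal 𝒜 s := by
  intro x hx
  have hxJ : x ∈ ⨆ i ∈ Set.Ioo 0 s, 𝒜 i :=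
    (le_iSup₂ (f := fun (i : ℕ) (_ : i ∈ Set.Ioo 0 s) => 𝒜 i) i ⟨h0, hs⟩) hx
  simpa only [gIdeal, mul_one] using Submodule.mul_mem_mul hxJ (Submodule.mem_top (x := (1 : R)))

lemma map_gProj_J_le (s a : ℕ) :
    (⨆ i ∈ Set.Ioo 0 s, 𝒜 i).map (gProj 𝒜 a) ≤
      if a ∈ Set.Ioo 0 s then 𝒜 a else ⊥ := by
  rw [Submodule.map_iSup]
  refine iSup_le fun i => ?_
  rw [Submodule.map_iSup]
  refine iSup_le fun hi => ?_
  rcases eq_or_ne i a with rfl | hne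
  · rw [if_pos hi]; exact map_gProj_le 𝒜 i _
  · rintro _ ⟨x, hx, rfl⟩
    rw [gProj_of_mem_ne 𝒜 hx hne]
    exact Submodule.zero_mem _

lemma T1 (s j : ℕ) : ∀ m, m < (j + 1) * s → 𝒜 m ⊓ gradePos 𝒜 ^ (j + 1) ≤ gIdeal 𝒜 s := by
  induction j with
  | zero =>
    intro m hm
    rw [pow_one]
    rcases Nat.eq_zero_or_pos m with rfl | hpos
    · intro x hx
      have hx0 : x = 0 := by
        have := gradePos_le_ker 𝒜 hx.2
        rw [LinearMap.mem_ker, gProj_of_mem_same 𝒜 hx.1] at this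
        exact this
      rw [hx0]; exact Submodule.zero_mem _
    · exact le_trans inf_le_left (A_le_gIdeal 𝒜 hpos (by omega))
  | succ j ih =>
    intro m hm
    intro x hx
    have hxq : x ∈ (gradePos 𝒜 ^ (j + 1) * gradePos 𝒜).map (gProj 𝒜 m) := by
      rw [← pow_succ]
      rw [← gProj_of_mem_same 𝒜 hx.1]
      exact Submodule.mem_map_of_mem hx.2
    have hsup := map_gProj_mul_le 𝒜 m _ _ hxq
    revert hsup
    refine fun hsup => (iSup_le fun p => iSup_le fun hp => ?_ :
      (⨆ (p : ℕ × ℕ) (_ : p.1 + p.2 = m), (gradePos 𝒜 ^ (j + 1)).map (gProj 𝒜 p.1) *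
        (gradePos 𝒜).map (gProj 𝒜 p.2) : Submodule F R) ≤ gIdeal 𝒜 s) hsup
    rcases Nat.eq_zero_or_pos p.2 with h2 | h2
    · have hb : (gradePos 𝒜).map (gProj 𝒜 p.2) ≤ ⊥ := h2 ▸ map_gProj_zero_gradePos 𝒜
      refine le_trans (mul_le_mul' le_top hb) ?_
      rw [Submodule.mul_bot]; exact bot_le
    · rcases lt_or_ge p.1 ((j + 1) * s) with h1 | h1
      · refine le_trans (mul_le_mul'
          (le_trans (map_gProj_pow_le 𝒜 j p.1) (ih p.1 h1)) le_top) ?_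
        exact mul_gIdeal_le 𝒜 s ⊤
      · have hlt : p.2 < s := by
          have := hp; nlinarith [hp, hm, h1]
        refine le_trans (mul_le_mul'
          (le_trans (map_gProj_le 𝒜 p.1 _) le_top)
          (le_trans (map_gProj_le 𝒜 p.2 _) (A_le_gIdeal 𝒜 h2 hlt))) ?_
        rw [mul_comm]
        exact mul_gIdeal_le 𝒜 s ⊤
  
end aux2
section aux3

variable {F R : Type*} [Field F] [CommRing R] [Algebra F R]
variable (𝒜 : ℕ → Submodule F R) [GradedAlgebra 𝒜]

lemma stepA (s n : ℕ) (h0 : 𝒜 0 = 1) (hfg : Algebra.FiniteType F R)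
    (hI : ∀ m, n ≤ m → 𝒜 m ≤ gIdeal 𝒜 s) :
    Module.Finite (gBelow 𝒜 (s - 1)) R := by
  classical
  obtain ⟨s₀, hs₀⟩ := hfg.out
  set T := gBelow 𝒜 (s - 1) with hT
  set S : Set R := {x | x ≠ 0 ∧ ∃ i, 0 < i ∧ x ∈ 𝒜 i ∧ ∃ g ∈ (s₀ : Set R), x = gProj 𝒜 i g}
    with hS
  have hSfin : S.Finite := by
    refine Set.Finite.subset (Set.Finite.biUnion s₀.finite_toSet
      (fun g _ => Set.Finite.image (fun i => gProj 𝒜 i g)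
        (DirectSum.decompose 𝒜 g).support.finite_toSet)) ?_
    rintro x ⟨hx0, i, hipos, hxi, g, hg, rfl⟩
    refine Set.mem_biUnion hg ⟨i, ?_, rfl⟩
    simp only [Finset.coe_sort_coe, Finset.mem_coe, DFinsupp.mem_support_iff]
    intro hcon
    apply hx0
    rw [gProj_apply, hcon]
    rfl
  have hSdeg : ∀ y ∈ S, ∃ i, 0 < i ∧ y ∈ 𝒜 i := by
    rintro y ⟨_, i, hipos, hyi, _⟩
    exact ⟨i, hipos, hyi⟩
  have hSgen : Algebra.adjoin F S = ⊤ := by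
    rw [eq_top_iff, ← hs₀]
    refine Algebra.adjoin_le ?_
    intro g hg
    have hgsum : g = ∑ i ∈ (DirectSum.decompose 𝒜 g).support, ((DirectSum.decompose 𝒜 g) i : R) :=
      (DirectSum.sum_support_decompose 𝒜 g).symm
    rw [hgsum]
    refine Subalgebra.sum_mem _ fun i _ => ?_
    rcases Nat.eq_zero_or_pos i with rfl | hipos
    · have h00 : ((DirectSum.decompose 𝒜 g) 0 : R) ∈ (1 : Submodule F R) :=
        (le_of_eq h0) (gProj_mem 𝒜 0 g)
      rw [Submodule.mem_one] at h00
      obtain ⟨c, hc⟩ := h00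
      have hmem := Subalgebra.algebraMap_mem (Algebra.adjoin F S) c
      rwa [hc] at hmem
    · rcases eq_or_ne ((DirectSum.decompose 𝒜 g) i : R) 0 with hz | hz
      · rw [hz]; exact Subalgebra.zero_mem _
      · exact Algebra.subset_adjoin ⟨hz, i, hipos, gProj_mem 𝒜 i g, g, hg, rfl⟩
  have listLemma : ∀ l : List R, (∀ y ∈ l, y ∈ S) → ∃ j, l.length ≤ j ∧ l.prod ∈ 𝒜 j := by
    intro l
    induction l with
    | nil =>
      intro _
      exact ⟨0, le_rfl, by simpa using SetLike.one_mem_graded 𝒜⟩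
    | cons y t ih =>
      intro h
      obtain ⟨j, hlen, hmem⟩ := ih fun z hz => h z (List.mem_cons_of_mem _ hz)
      obtain ⟨i, hipos, hiy⟩ := hSdeg y (h y List.mem_cons_self)
      refine ⟨i + j, ?_, ?_⟩
      · simp only [List.length_cons]; omega
      · rw [List.prod_cons]; exact SetLike.mul_mem_graded hiy hmem
  haveI : Finite ↥S := hSfin.to_subtype
  set P : Set R := insert (1 : R)
    ((fun l : List ↥S => (l.map Subtype.val).prod) '' {l | l.length ≤ n}) with hP
  have hPfin : P.Finite :=
    Set.Finite.insert _ (Set.Finite.image _ (List.finite_length_le ↥S n))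
  set N : Submodule ↥T R := Submodule.span ↥T P with hN
  set N' : Submodule F R := N.restrictScalars F with hN'
  have h1N : (1 : R) ∈ N' := Submodule.subset_span (Set.mem_insert _ _)
  have hA0 : 𝒜 0 ≤ N' := by
    intro x hx
    rw [h0, Submodule.mem_one] at hx
    obtain ⟨c, rfl⟩ := hx
    rw [Algebra.algebraMap_eq_smul_one]
    exact Submodule.smul_mem _ c h1N
  have hTA : ∀ i, i ≤ s - 1 → ∀ y ∈ 𝒜 i, y ∈ T :=
    fun i hi y hy => Algebra.subset_adjoin (Set.mem_biUnion hi hy)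
  have hmulTN : ∀ i, i ≤ s - 1 → ∀ y ∈ 𝒜 i, ∀ z ∈ N', y * z ∈ N' := by
    intro i hi y hy z hz
    have hsm : (⟨y, hTA i hi y hy⟩ : ↥T) • z ∈ N := N.smul_mem _ hz
    rwa [Subalgebra.smul_def] at hsm
  have hC : ∀ m, 0 < m → m ≤ n → 𝒜 m ≤ N' := by
    intro m hm hmn x hx
    have hxspan : x ∈ Submodule.span F ↑(Submonoid.closure S) := by
      have hx' : x ∈ Subalgebra.toSubmodule (Algebra.adjoin F S) := by
        rw [hSgen]; trivial
      rwa [Algebra.adjoin_eq_span] at hx'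
    have hximg : gProj 𝒜 m x ∈ (Submodule.span F ↑(Submonoid.closure S)).map (gProj 𝒜 m) :=
      Submodule.mem_map_of_mem hxspan
    rw [gProj_of_mem_same 𝒜 hx, Submodule.map_span] at hximg
    refine Submodule.span_le.2 ?_ hximg
    rintro _ ⟨c, hc, rfl⟩
    obtain ⟨l, hl, rfl⟩ := Submonoid.exists_list_of_mem_closure hc
    obtain ⟨j, hlen, hj⟩ := listLemma l hl
    rcases eq_or_ne j m with rfl | hne
    · rw [gProj_of_mem_same 𝒜 hj]
      have hmap : List.map Subtype.val (l.pmap (fun y hy => (⟨y, hy⟩ : ↥S)) hl) = l := by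
        rw [List.map_pmap]
        exact (List.pmap_eq_map hl).trans (List.map_id l)
      refine Submodule.subset_span (Set.mem_insert_iff.2 (Or.inr ?_))
      refine ⟨l.pmap (fun y hy => (⟨y, hy⟩ : ↥S)) hl, ?_, ?_⟩
      · simp only [Set.mem_setOf_eq, List.length_pmap]; omega
      · exact congrArg List.prod hmap
    · rw [gProj_of_mem_ne 𝒜 hj hne]
      exact Submodule.zero_mem _
  have key : ∀ m : ℕ, 𝒜 m ≤ N' := by
    intro m
    induction m using Nat.strong_induction_on with
    | _ m ih =>
      rcases Nat.eq_zero_or_pos m with rfl | hm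
      · exact hA0
      rcases lt_or_ge m n with hmn | hmn
      · exact hC m hm (le_of_lt hmn)
      intro x hx
      have hxI : x ∈ (gIdeal 𝒜 s).map (gProj 𝒜 m) := by
        rw [← gProj_of_mem_same 𝒜 hx]
        exact Submodule.mem_map_of_mem (hI m hmn hx)
      rw [gIdeal] at hxI
      have hxsup := map_gProj_mul_le 𝒜 m (⨆ i ∈ Set.Ioo 0 s, 𝒜 i) ⊤ hxI
      refine (iSup_le fun p => iSup_le fun hp => ?_ :
        (⨆ (p : ℕ × ℕ) (_ : p.1 + p.2 = m),
          (⨆ i ∈ Set.Ioo 0 s, 𝒜 i).map (gProj 𝒜 p.1) * (⊤ : Submodule F R).map (gProj 𝒜 p.2) :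
            Submodule F R) ≤ N') hxsup
      by_cases h1 : p.1 ∈ Set.Ioo 0 s
      · refine le_trans (mul_le_mul'
          (le_trans (map_gProj_J_le 𝒜 s p.1) (le_of_eq (if_pos h1))) (map_gProj_le 𝒜 p.2 _)) ?_
        refine Submodule.mul_le.2 fun y hy z hz => ?_
        obtain ⟨hp1, hp2⟩ := h1
        have hzN : z ∈ N' := ih p.2 (by omega) hz
        exact hmulTN p.1 (by omega) y hy z hzN
      · refine le_trans (mul_le_mul'
          (le_trans (map_gProj_J_le 𝒜 s p.1) (le_of_eq (if_neg h1))) le_top) ?_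
        rw [Submodule.bot_mul]
        exact bot_le
  have hNtop : N = ⊤ := by
    rw [eq_top_iff]
    intro x _
    have hxsum : x = ∑ i ∈ (DirectSum.decompose 𝒜 x).support, ((DirectSum.decompose 𝒜 x) i : R) :=
      (DirectSum.sum_support_decompose 𝒜 x).symm
    rw [hxsum]
    exact Submodule.sum_mem _ fun i _ => key i (gProj_mem 𝒜 i x)
  exact ⟨⟨hPfin.toFinset, by rw [Set.Finite.coe_toFinset]; exact hNtop⟩⟩

end aux3


/-- For a finitely generated commutative graded `F`-algebra `R` with `R_0 = F` and any
positive integer `k`, `β_k(R) ≥ k·σ(R)`. -/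
theorem gBeta_ge_mul_gSigma {F R : Type*} [Field F] [CommRing R] [Algebra F R]
    (𝒜 : ℕ → Submodule F R) [GradedAlgebra 𝒜] (h0 : 𝒜 0 = 1)
    (hfg : Algebra.FiniteType F R) (k : ℕ) (hk : 1 ≤ k) :
    ((k * gSigma 𝒜 : ℕ) : ℕ∞) ≤ gBeta 𝒜 k := by
  classical
  obtain ⟨k', rfl⟩ : ∃ k', k = k' + 1 := ⟨k - 1, by omega⟩
  set s := gSigma 𝒜 with hsdef
  rcases Nat.eq_zero_or_pos s with hs0 | hs0
  · rw [hs0, mul_zero, Nat.cast_zero]; exact zero_le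
  have hfin : ¬ Module.Finite (gBelow 𝒜 (s - 1)) R := by
    intro hf
    have hle : s ≤ s - 1 := by
      rw [hsdef, gSigma]
      exact Nat.sInf_le hf
    omega
  have hex : ∃ d, (k' + 1) * s ≤ d ∧ ¬ 𝒜 d ≤ gIdeal 𝒜 s := by
    by_contra hall
    push_neg at hall
    exact hfin (stepA 𝒜 s ((k' + 1) * s) h0 hfg fun m hm => hall m hm)
  obtain ⟨hdge, hdnot⟩ := Nat.find_spec hex
  have hdmin : ∀ m, (k' + 1) * s ≤ m → m < Nat.find hex → 𝒜 m ≤ gIdeal 𝒜 s := by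
    intro m h1 h2
    by_contra hno
    have hcon : Nat.find hex ≤ m := Nat.find_le ⟨h1, hno⟩
    omega
  have hkey : ¬ 𝒜 (Nat.find hex) ≤ gradePos 𝒜 ^ (k' + 1 + 1) := by
    intro hle
    apply hdnot
    intro x hx
    have hxq : x ∈ ((gradePos 𝒜 ^ (k' + 1)) * gradePos 𝒜).map (gProj 𝒜 (Nat.find hex)) := by
      rw [← pow_succ, ← gProj_of_mem_same 𝒜 hx]
      exact Submodule.mem_map_of_mem (hle hx)
    have hxsup := map_gProj_mul_le 𝒜 (Nat.find hex) _ _ hxq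
    refine (iSup_le fun p => iSup_le fun hp => ?_ :
      (⨆ (p : ℕ × ℕ) (_ : p.1 + p.2 = Nat.find hex),
        (gradePos 𝒜 ^ (k' + 1)).map (gProj 𝒜 p.1) *
        (gradePos 𝒜).map (gProj 𝒜 p.2) : Submodule F R) ≤ gIdeal 𝒜 s) hxsup
    rcases Nat.eq_zero_or_pos p.2 with h2 | h2
    · have hb : (gradePos 𝒜).map (gProj 𝒜 p.2) ≤ ⊥ := h2 ▸ map_gProj_zero_gradePos 𝒜
      refine le_trans (mul_le_mul' le_top hb) ?_
      rw [Submodule.mul_bot]; exact bot_le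
    · rcases lt_or_ge p.1 ((k' + 1) * s) with h1 | h1
      · refine le_trans (mul_le_mul'
          (le_trans (map_gProj_pow_le 𝒜 k' p.1) (T1 𝒜 s k' p.1 h1)) le_top) ?_
        exact mul_gIdeal_le 𝒜 s ⊤
      · have hplt : p.1 < Nat.find hex := by omega
        refine le_trans (mul_le_mul'
          (le_trans (map_gProj_le 𝒜 p.1 _) (hdmin p.1 h1 hplt)) le_top) ?_
        exact mul_gIdeal_le 𝒜 s ⊤
  have hdpos : 0 < Nat.find hex := lt_of_lt_of_le (Nat.mul_pos (by omega) hs0) hdge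
  calc (((k' + 1) * s : ℕ) : ℕ∞) ≤ ((Nat.find hex : ℕ) : ℕ∞) := by exact_mod_cast hdge
    _ ≤ gBeta 𝒜 (k' + 1) := le_sSup ⟨Nat.find hex, ⟨hdpos, hkey⟩, rfl⟩
end

section
/- Let V_1, ..., V_n be G-modules and W = V_1 ⊕ ... ⊕ V_n. Then σ(G, W) = max_{i=1,...,n} σ(G, V_i). -/
open scoped ENNReal


open MvPolynomial

/-- The (right) action of a group element `g` on the coordinate ring `F[V]` of `V = ι → F`,
determined by `(f^g)(v) = f (g • v)` where `g` acts on `V` through the representation `ρ`. -/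
noncomputable def polyAct {F : Type*} [Field F] {G : Type*} [Group G] {ι : Type*}
    [Fintype ι] [DecidableEq ι] (ρ : Representation F G (ι → F)) (g : G) :
    MvPolynomial ι F →ₐ[F] MvPolynomial ι F :=
  MvPolynomial.aeval (fun i => ∑ j, (ρ g (Pi.single j 1) i) • MvPolynomial.X j)

/-- The ring of polynomial invariants `F[V]^G`. -/
noncomputable def invRing {F : Type*} [Field F] {G : Type*} [Group G] {ι : Type*}
    [Fintype ι] [DecidableEq ι] (ρ : Representation F G (ι → F)) :
    Subalgebra F (MvPolynomial ι F) :=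
  ⨅ g : G, AlgHom.equalizer (polyAct ρ g) (AlgHom.id F (MvPolynomial ι F))

/-- The degree `d` homogeneous component of a graded subalgebra `S` of the polynomial ring,
as a subspace of the polynomial ring. -/
noncomputable def subComp {F : Type*} [Field F] {ι : Type*} (S : Subalgebra F (MvPolynomial ι F)) (d : ℕ) :
    Submodule F (MvPolynomial ι F) :=
  Subalgebra.toSubmodule S ⊓ homogeneousSubmodule ι F d

/-- `S_+`, the span of the homogeneous elements of positive degree of `S`. -/
noncomputable def subPos {F : Type*} [Field F] {ι : Type*} (S : Subalgebra F (MvPolynomial ι F)) :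
    Submodule F (MvPolynomial ι F) :=
  ⨆ d ∈ Set.Ioi (0 : ℕ), subComp S d

/-- `β_k(S)`, the top degree of `S_+ / S_+^{k+1}`, i.e. the supremum (in `ℕ∞`) of the degrees `d`
such that the degree `d` component of `S_+` is not contained in `S_+^{k+1}`. -/
noncomputable def betaAlg {F : Type*} [Field F] {ι : Type*}
    (S : Subalgebra F (MvPolynomial ι F)) (k : ℕ) : ℕ∞ :=
  sSup ((fun d : ℕ => (d : ℕ∞)) '' {d | 0 < d ∧ ¬ subComp S d ≤ subPos S ^ (k + 1)})

/-- `β_k(F[V], S)`, the top degree of `F[V]/S_+^k F[V]`, i.e. the supremum (in `ℕ∞`) of the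
degrees `d` such that the degree `d` component of the polynomial ring is not contained in
`S_+^k ⬝ F[V]`. -/
noncomputable def betaMod {F : Type*} [Field F] {ι : Type*}
    (S : Subalgebra F (MvPolynomial ι F)) (k : ℕ) : ℕ∞ :=
  sSup ((fun d : ℕ => (d : ℕ∞)) ''
    {d | ¬ homogeneousSubmodule ι F d ≤ subPos S ^ k * (⊤ : Submodule F (MvPolynomial ι F))})

/-- `β_k(G)`, the supremum over all finite dimensional `G`-modules `V` of `β_k(F[V]^G)`. -/
noncomputable def betaGrp (F : Type*) [Field F] (G : Type*) [Group G] (k : ℕ) : ℕ∞ :=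
  ⨆ (n : ℕ) (ρ : Representation F G (Fin n → F)), betaAlg (invRing ρ) k

/-- `S` is a finitely generated module over its subalgebra `T`. -/
noncomputable def fgOver {F : Type*} [Field F] {ι : Type*} (S T : Subalgebra F (MvPolynomial ι F)) : Prop :=
  ∃ B : Finset (MvPolynomial ι F), (B : Set (MvPolynomial ι F)) ⊆ S ∧
    Subalgebra.toSubmodule S ≤ Subalgebra.toSubmodule T * Submodule.span F (B : Set (MvPolynomial ι F))

/-- `σ(S)`: the minimal `d` such that `S` is a finitely generated module over the subalgebra
`F[S_{≤ d}]` generated by the homogeneous elements of `S` of degree at most `d`. -/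
noncomputable def sigmaAlg {F : Type*} [Field F] {ι : Type*}
    (S : Subalgebra F (MvPolynomial ι F)) : ℕ :=
  sInf {d : ℕ | fgOver S (Algebra.adjoin F (⋃ i ∈ Set.Iic d, (subComp S i : Set (MvPolynomial ι F))))}

/-- `σ(G)`, the supremum over all finite dimensional `G`-modules `V` of `σ(F[V]^G)`. -/
noncomputable def sigmaGrp (F : Type*) [Field F] (G : Type*) [Group G] : ℕ∞ :=
  ⨆ (n : ℕ) (ρ : Representation F G (Fin n → F)), (sigmaAlg (invRing ρ) : ℕ∞)

/-- An irreducible (simple, nonzero) representation. -/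
def IsIrredRep {F : Type*} [Field F] {G : Type*} [Group G] {V : Type*}
    [AddCommGroup V] [Module F V] (π : Representation F G V) : Prop :=
  Nontrivial V ∧ ∀ W : Submodule F V, (∀ g : G, ∀ x ∈ W, π g x ∈ W) → W = ⊥ ∨ W = ⊤

/-- The direct sum of two representations on spaces of the form `ι → F`. -/
noncomputable def repSum {F : Type*} [Field F] {G : Type*} [Group G] {α β : Type*}
    (ρ : Representation F G (α → F)) (π : Representation F G (β → F)) :
    Representation F G (α ⊕ β → F) where
  toFun g :=
    { toFun := fun v => Sum.elim (fun i => ρ g (fun i' => v (Sum.inl i')) i)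
        (fun j => π g (fun j' => v (Sum.inr j')) j)
      map_add' := fun u v => by
        funext x
        cases x with
        | inl i => exact congrFun (map_add (ρ g) _ _) i
        | inr j => exact congrFun (map_add (π g) _ _) j
      map_smul' := fun c v => by
        funext x
        cases x with
        | inl i => exact congrFun (map_smul (ρ g) c _) i
        | inr j => exact congrFun (map_smul (π g) c _) j }
  map_one' := by
    ext v x
    cases x <;> simp
  map_mul' := fun g h => by
    ext v x
    cases x <;> simp [map_mul]

/-- The direct sum of a finite family of representations on spaces of the form `κ i → F`. -/
noncomputable def repSigma {F : Type*} [Field F] {G : Type*} [Group G] {n : ℕ}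
    {κ : Fin n → Type*} (ρ : ∀ i, Representation F G (κ i → F)) :
    Representation F G ((Σ i, κ i) → F) where
  toFun g :=
    { toFun := fun v x => ρ x.1 g (fun j => v ⟨x.1, j⟩) x.2
      map_add' := fun u v => by funext x; exact congrFun (map_add (ρ x.1 g) _ _) x.2
      map_smul' := fun c v => by funext x; exact congrFun (map_smul (ρ x.1 g) c _) x.2 }
  map_one' := by
    ext v x
    simp
  map_mul' := fun g h => by
    ext v x
    simp [map_mul]

section Basic
variable {F : Type*} [Field F] {G : Type*} [Group G] {ι : Type*}
    [Fintype ι] [DecidableEq ι] (ρ : Representation F G (ι → F))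

theorem mem_invRing {f : MvPolynomial ι F} :
    f ∈ invRing ρ ↔ ∀ g : G, polyAct ρ g f = f := by
  simp [invRing, Algebra.mem_iInf, AlgHom.mem_equalizer]

theorem polyAct_X (g : G) (i : ι) :
    polyAct ρ g (X i) = ∑ j, (ρ g (Pi.single j 1) i) • X j := by
  simp [polyAct]

theorem polyAct_one (f : MvPolynomial ι F) : polyAct ρ 1 f = f := by
  have h : polyAct ρ 1 = AlgHom.id F (MvPolynomial ι F) := by
    apply MvPolynomial.algHom_ext
    intro i
    simp [polyAct, Pi.single_apply]
  rw [h]; rfl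

theorem rep_apply_eq_sum (g : G) (v : ι → F) (i : ι) :
    ρ g v i = ∑ j, v j * ρ g (Pi.single j 1) i := by
  have hv : (∑ j, v j • (Pi.single j (1:F) : ι → F)) = v := by
    funext x
    simp [Pi.single_apply]
  conv_lhs => rw [← hv]
  rw [map_sum]
  simp [Finset.sum_apply]

theorem polyAct_polyAct (g h : G) (f : MvPolynomial ι F) :
    polyAct ρ h (polyAct ρ g f) = polyAct ρ (g * h) f := by
  suffices h' : (polyAct ρ h).comp (polyAct ρ g) = polyAct ρ (g * h) by
    calc polyAct ρ h (polyAct ρ g f) = ((polyAct ρ h).comp (polyAct ρ g)) f := rfl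
    _ = polyAct ρ (g * h) f := by rw [h']
  apply MvPolynomial.algHom_ext
  intro i
  simp only [AlgHom.comp_apply, polyAct_X, map_sum, map_smul, Finset.smul_sum, smul_smul]
  rw [Finset.sum_comm]
  refine Finset.sum_congr rfl fun k _ => ?_
  rw [← Finset.sum_smul]
  congr 1
  rw [map_mul ρ, Module.End.mul_apply, rep_apply_eq_sum ρ g (ρ h (Pi.single k 1)) i]
  exact Finset.sum_congr rfl fun j _ => mul_comm _ _

theorem polyAct_mem_homogeneous (g : G) {d : ℕ} {f : MvPolynomial ι F}
    (hf : f ∈ homogeneousSubmodule ι F d) :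
    polyAct ρ g f ∈ homogeneousSubmodule ι F d := by
  rw [mem_homogeneousSubmodule] at *
  have h1 : ∀ i : ι, ((∑ j, (ρ g (Pi.single j 1) i) • X j : MvPolynomial ι F)).IsHomogeneous 1 := by
    intro i
    rw [← mem_homogeneousSubmodule]
    exact Submodule.sum_mem _ fun j _ => Submodule.smul_mem _ _
      (by rw [mem_homogeneousSubmodule]; exact isHomogeneous_X _ _)
  have := hf.aeval (fun i => ∑ j, (ρ g (Pi.single j 1) i) • X j) h1
  simpa [polyAct, one_mul] using this

theorem homogeneousComponent_map {τ : Type*} (φ : MvPolynomial ι F →ₗ[F] MvPolynomial τ F)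
    (hφ : ∀ (n : ℕ) (p : MvPolynomial ι F), p ∈ homogeneousSubmodule ι F n →
      φ p ∈ homogeneousSubmodule τ F n)
    (e : ℕ) (f : MvPolynomial ι F) :
    homogeneousComponent e (φ f) = φ (homogeneousComponent e f) := by
  conv_lhs => rw [← sum_homogeneousComponent f]
  rw [map_sum, map_sum]
  have key : ∀ i : ℕ, homogeneousComponent e (φ (homogeneousComponent i f))
      = if e = i then φ (homogeneousComponent i f) else 0 := fun i =>
    homogeneousComponent_of_mem (hφ i _ (homogeneousComponent_isHomogeneous i f))
  rw [Finset.sum_congr rfl fun i _ => key i, Finset.sum_ite_eq]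
  by_cases he : e ∈ Finset.range (f.totalDegree + 1)
  · rw [if_pos he]
  · rw [if_neg he]
    have h0 : homogeneousComponent e f = 0 :=
      homogeneousComponent_eq_zero _ _
        (by simpa [Finset.mem_range, Nat.lt_succ_iff, not_le] using he)
    rw [h0, map_zero]

theorem homogeneousComponent_mem_invRing {f : MvPolynomial ι F} (hf : f ∈ invRing ρ) (e : ℕ) :
    homogeneousComponent e f ∈ invRing ρ := by
  rw [mem_invRing] at hf ⊢
  intro g
  calc polyAct ρ g (homogeneousComponent e f)
      = homogeneousComponent e (polyAct ρ g f) :=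
        (homogeneousComponent_map (polyAct ρ g).toLinearMap
          (fun n p hp => polyAct_mem_homogeneous ρ g hp) e f).symm
    _ = homogeneousComponent e f := by rw [hf g]

end Basic
section Reynolds
variable {F : Type*} [Field F] {G : Type*} [Group G] [Finite G] {ι : Type*}
    [Fintype ι] [DecidableEq ι] (ρ : Representation F G (ι → F))

/-- The Reynolds operator. -/
noncomputable def reynolds : MvPolynomial ι F →ₗ[F] MvPolynomial ι F :=
  letI := Fintype.ofFinite G
  (Nat.card G : F)⁻¹ • ∑ g : G, (polyAct ρ g).toLinearMap

theorem reynolds_apply (f : MvPolynomial ι F) :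
    letI := Fintype.ofFinite G
    reynolds ρ f = (Nat.card G : F)⁻¹ • ∑ g : G, polyAct ρ g f := by
  letI := Fintype.ofFinite G
  simp [reynolds, LinearMap.sum_apply]

theorem reynolds_mem_invRing (f : MvPolynomial ι F) : reynolds ρ f ∈ invRing ρ := by
  letI := Fintype.ofFinite G
  rw [mem_invRing]
  intro h
  rw [reynolds_apply]
  simp only [map_smul, map_sum]
  congr 1
  refine Fintype.sum_equiv (Equiv.mulRight h) _ _ fun g => ?_
  simp [polyAct_polyAct]

theorem reynolds_of_mem (hG : (Nat.card G : F) ≠ 0) {f : MvPolynomial ι F}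
    (hf : f ∈ invRing ρ) : reynolds ρ f = f := by
  letI := Fintype.ofFinite G
  rw [mem_invRing] at hf
  rw [reynolds_apply]
  have : ∀ g : G, polyAct ρ g f = f := hf
  rw [Finset.sum_congr rfl fun g _ => this g, Finset.sum_const, Finset.card_univ,
    ← Nat.cast_smul_eq_nsmul F, smul_smul, Nat.card_eq_fintype_card,
    inv_mul_cancel₀ (by rwa [Nat.card_eq_fintype_card] at hG), one_smul]

theorem reynolds_mul {t : MvPolynomial ι F} (ht : t ∈ invRing ρ) (f : MvPolynomial ι F) :
    reynolds ρ (t * f) = t * reynolds ρ f := by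
  letI := Fintype.ofFinite G
  rw [mem_invRing] at ht
  rw [reynolds_apply, reynolds_apply]
  rw [Finset.sum_congr rfl fun g _ => ?_, ← Finset.mul_sum, mul_smul_comm]
  rw [map_mul, ht g]

theorem reynolds_mem_homogeneous {d : ℕ} {f : MvPolynomial ι F}
    (hf : f ∈ homogeneousSubmodule ι F d) :
    reynolds ρ f ∈ homogeneousSubmodule ι F d := by
  letI := Fintype.ofFinite G
  rw [reynolds_apply]
  exact Submodule.smul_mem _ _ (Submodule.sum_mem _ fun g _ => polyAct_mem_homogeneous ρ g hf)

end Reynolds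
/-- The subalgebra generated by homogeneous invariants of degree at most `d`. -/
noncomputable def degAlg {F : Type*} [Field F] {ι : Type*}
    (S : Subalgebra F (MvPolynomial ι F)) (d : ℕ) : Subalgebra F (MvPolynomial ι F) :=
  Algebra.adjoin F (⋃ i ∈ Set.Iic d, (subComp S i : Set (MvPolynomial ι F)))

theorem sigmaAlg_def {F : Type*} [Field F] {ι : Type*} (S : Subalgebra F (MvPolynomial ι F)) :
    sigmaAlg S = sInf {d : ℕ | fgOver S (degAlg S d)} := rfl

theorem degAlg_le_self {F : Type*} [Field F] {ι : Type*} (S : Subalgebra F (MvPolynomial ι F))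
    (d : ℕ) : degAlg S d ≤ S := by
  apply Algebra.adjoin_le
  intro x hx
  simp only [Set.mem_iUnion] at hx
  obtain ⟨i, _, hx⟩ := hx
  exact hx.1

theorem degAlg_mono {F : Type*} [Field F] {ι : Type*} (S : Subalgebra F (MvPolynomial ι F))
    {d d' : ℕ} (h : d ≤ d') : degAlg S d ≤ degAlg S d' := by
  apply Algebra.adjoin_le
  intro x hx
  apply Algebra.subset_adjoin
  simp only [Set.mem_iUnion] at hx ⊢
  obtain ⟨i, hi, hx⟩ := hx
  exact ⟨i, le_trans hi h, hx⟩

theorem fgOver_mono {F : Type*} [Field F] {ι : Type*} {S T T' : Subalgebra F (MvPolynomial ι F)}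
    (hT : T ≤ T') (h : fgOver S T) : fgOver S T' := by
  obtain ⟨B, hB, hle⟩ := h
  exact ⟨B, hB, le_trans hle (mul_le_mul' (Subalgebra.toSubmodule.monotone hT) le_rfl)⟩

section Noether
variable {F : Type*} [Field F] {G : Type*} [Group G] [Finite G] {ι : Type*}
    [Fintype ι] [DecidableEq ι] (ρ : Representation F G (ι → F))

theorem isIntegral_invRing (x : MvPolynomial ι F) : IsIntegral (↥(invRing ρ)) x := by
  letI := Fintype.ofFinite G
  set p : Polynomial (MvPolynomial ι F) :=
    ∏ g : G, (Polynomial.X - Polynomial.C (polyAct ρ g x)) with hp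
  have hmonic : p.Monic :=
    Polynomial.monic_prod_of_monic _ _ fun g _ => Polynomial.monic_X_sub_C _
  have hcoeff : ∀ n, p.coeff n ∈ invRing ρ := by
    intro n
    rw [mem_invRing]
    intro h
    have hmap : p.map (polyAct ρ h : MvPolynomial ι F →+* MvPolynomial ι F) = p := by
      rw [hp, Polynomial.map_prod]
      refine Fintype.prod_equiv (Equiv.mulRight h) _ _ fun g => ?_
      simp [polyAct_polyAct]
    calc polyAct ρ h (p.coeff n)
        = (p.map (polyAct ρ h : MvPolynomial ι F →+* MvPolynomial ι F)).coeff n :=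
          (Polynomial.coeff_map _ _).symm
      _ = p.coeff n := by rw [hmap]
  have heval : p.eval x = 0 := by
    rw [hp, Polynomial.eval_prod]
    refine Finset.prod_eq_zero (Finset.mem_univ (1 : G)) ?_
    simp [polyAct_one]
  have hs : (↑p.coeffs : Set (MvPolynomial ι F)) ⊆ (invRing ρ).toSubring := by
    intro c hc
    obtain ⟨n, _, rfl⟩ := Polynomial.mem_coeffs_iff.mp hc
    exact hcoeff n
  refine ⟨p.toSubring (invRing ρ).toSubring hs,
    (Polynomial.monic_toSubring _ _ _).mpr hmonic, ?_⟩
  have halg : algebraMap (↥(invRing ρ)) (MvPolynomial ι F) = (invRing ρ).toSubring.subtype := rfl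
  rw [Polynomial.eval₂_eq_eval_map, halg, Polynomial.map_toSubring]
  exact heval

theorem finite_over_invRing : Module.Finite (↥(invRing ρ)) (MvPolynomial ι F) := by
  have hadj : Algebra.adjoin (↥(invRing ρ)) (Set.range (X : ι → MvPolynomial ι F)) = ⊤ := by
    rw [eq_top_iff]
    intro f _
    have hf : f ∈ Algebra.adjoin F (Set.range (X : ι → MvPolynomial ι F)) := by
      rw [MvPolynomial.adjoin_range_X]; trivial
    have hsub : Set.range (X : ι → MvPolynomial ι F) ⊆
        (Subalgebra.restrictScalars F
          (Algebra.adjoin (↥(invRing ρ)) (Set.range (X : ι → MvPolynomial ι F))) :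
            Set (MvPolynomial ι F)) := by
      intro x hx
      rw [SetLike.mem_coe, Subalgebra.mem_restrictScalars]
      exact Algebra.subset_adjoin hx
    exact Algebra.adjoin_le hsub hf
  have hfg := fg_adjoin_of_finite (Set.finite_range (X : ι → MvPolynomial ι F))
    (fun x _ => isIntegral_invRing ρ x)
  rw [hadj] at hfg
  exact ⟨by rwa [Algebra.top_toSubmodule] at hfg⟩

theorem span_subalgebra_le {S : Subalgebra F (MvPolynomial ι F)} {C : Set (MvPolynomial ι F)}
    {f : MvPolynomial ι F} (hf : f ∈ Submodule.span (↥S) C) :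
    f ∈ Subalgebra.toSubmodule S * Submodule.span F C := by
  induction hf using Submodule.span_induction with
  | mem x hx =>
      simpa using Submodule.mul_mem_mul (show (1 : MvPolynomial ι F) ∈
        Subalgebra.toSubmodule S from one_mem S) (Submodule.subset_span hx)
  | zero => exact zero_mem _
  | add x y _ _ hx hy => exact add_mem hx hy
  | smul s x _ hx =>
      have h1 : (s : MvPolynomial ι F) * x ∈
          Subalgebra.toSubmodule S * (Subalgebra.toSubmodule S * Submodule.span F C) :=
        Submodule.mul_mem_mul s.2 hx
      have h2 : Subalgebra.toSubmodule S * (Subalgebra.toSubmodule S * Submodule.span F C) ≤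
          Subalgebra.toSubmodule S * Submodule.span F C := by
        rw [← mul_assoc]
        exact mul_le_mul' (Submodule.mul_le.mpr fun a ha b hb => S.mul_mem ha hb) le_rfl
      have : s • x = (s : MvPolynomial ι F) * x := by
        rw [Algebra.smul_def]; rfl
      rw [this]
      exact h2 h1

theorem noether_top_le : ∃ C : Finset (MvPolynomial ι F),
    (⊤ : Submodule F (MvPolynomial ι F)) ≤
      Subalgebra.toSubmodule (invRing ρ) * Submodule.span F (C : Set (MvPolynomial ι F)) := by
  obtain ⟨C, hC⟩ := (finite_over_invRing ρ).fg_top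
  refine ⟨C, fun f _ => span_subalgebra_le ?_⟩
  rw [hC]; trivial

theorem exists_fgOver_degAlg : ∃ d : ℕ, fgOver (invRing ρ) (degAlg (invRing ρ) d) := by
  have hft : (⊤ : Subalgebra F (↥(invRing ρ))).FG := by
    have := finite_over_invRing ρ
    exact fg_of_fg_of_fg (A := F) (B := ↥(invRing ρ)) (C := MvPolynomial ι F)
      (inferInstance : Algebra.FiniteType F (MvPolynomial ι F)).out this.fg_top
      (fun a b h => Subtype.ext h)
  obtain ⟨t, ht⟩ := hft
  letI := Classical.decEq (MvPolynomial ι F)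
  set u : Finset (MvPolynomial ι F) := t.image Subtype.val with hu
  have hadj : Algebra.adjoin F (u : Set (MvPolynomial ι F)) = invRing ρ := by
    have hcoe : (u : Set (MvPolynomial ι F)) = ((invRing ρ).val) '' (t : Set ↥(invRing ρ)) := by
      rw [hu, Finset.coe_image]; rfl

    rw [hcoe, ← AlgHom.map_adjoin, ht, Algebra.map_top, Subalgebra.range_val]
  set d : ℕ := u.sup (fun y => y.totalDegree) with hd
  refine ⟨d, {1}, by simpa using one_mem (invRing ρ), ?_⟩
  have hle : invRing ρ ≤ degAlg (invRing ρ) d := by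
    refine le_trans (le_of_eq hadj.symm) (Algebra.adjoin_le ?_)
    intro y hy
    have hyS : y ∈ invRing ρ := by rw [← hadj]; exact Algebra.subset_adjoin hy
    have := sum_homogeneousComponent y
    rw [show y = ∑ e ∈ Finset.range (y.totalDegree + 1), homogeneousComponent e y from this.symm]
    apply Subalgebra.sum_mem
    intro e he
    apply Algebra.subset_adjoin
    simp only [Set.mem_iUnion]
    refine ⟨e, ?_, ?_⟩
    · simp only [Set.mem_Iic]
      calc e ≤ y.totalDegree := Nat.lt_succ_iff.mp (Finset.mem_range.mp he)
      _ ≤ d := Finset.le_sup hy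
    · exact ⟨homogeneousComponent_mem_invRing ρ hyS e, homogeneousComponent_mem e y⟩
  intro f hf
  have : Submodule.span F ({1} : Set (MvPolynomial ι F)) = 1 := Submodule.one_eq_span.symm
  rw [Finset.coe_singleton, this, Submodule.mul_one]
  exact hle hf

end Noether
section SigmaMaps
variable {F : Type*} [Field F] {G : Type*} [Group G] {n : ℕ} {κ : Fin n → ℕ}

/-- Inclusion of the `i`-th block coordinate ring. -/
noncomputable def inclHom (i : Fin n) :
    MvPolynomial (Fin (κ i)) F →ₐ[F] MvPolynomial (Σ i, Fin (κ i)) F :=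
  rename (fun j => (⟨i, j⟩ : Σ i, Fin (κ i)))

/-- Projection onto the `i`-th block coordinate ring. -/
noncomputable def projHom (i : Fin n) :
    MvPolynomial (Σ i, Fin (κ i)) F →ₐ[F] MvPolynomial (Fin (κ i)) F :=
  aeval (fun x : Σ i, Fin (κ i) => if h : x.1 = i then X (h ▸ x.2) else 0)

theorem inclHom_X (i : Fin n) (j : Fin (κ i)) :
    inclHom (F := F) (κ := κ) i (X j) = X ⟨i, j⟩ := by
  simp [inclHom]

theorem projHom_X (i : Fin n) (x : Σ i, Fin (κ i)) :
    projHom (F := F) i (X x) = if h : x.1 = i then X (h ▸ x.2) else 0 := by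
  simp [projHom]

theorem projHom_X_mk_eq (i : Fin n) (j' : Fin (κ i)) :
    projHom (F := F) i (X (⟨i, j'⟩ : Σ i, Fin (κ i))) = X j' := by
  simp [projHom]

theorem projHom_X_mk_ne (i i' : Fin n) (h : i' ≠ i) (j' : Fin (κ i')) :
    projHom (F := F) i (X (⟨i', j'⟩ : Σ i, Fin (κ i))) = 0 := by
  simp [projHom, h]

theorem projHom_inclHom (i : Fin n) (f : MvPolynomial (Fin (κ i)) F) :
    projHom i (inclHom i f) = f := by
  suffices h : (projHom (F := F) i).comp (inclHom i) = AlgHom.id F _ by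
    calc projHom i (inclHom i f) = ((projHom (F := F) i).comp (inclHom i)) f := rfl
    _ = f := by rw [h]; rfl
  apply MvPolynomial.algHom_ext
  intro j
  simp [inclHom_X, projHom_X]

variable (ρ : ∀ i, Representation F G (Fin (κ i) → F))

theorem repSigma_apply (g : G) (v : (Σ i, Fin (κ i)) → F) (i : Fin n) (j : Fin (κ i)) :
    repSigma ρ g v ⟨i, j⟩ = ρ i g (fun j₀ => v ⟨i, j₀⟩) j := rfl

theorem single_block_ne (i i' : Fin n) (j' : Fin (κ i')) (h : i' ≠ i) :
    (fun j₀ : Fin (κ i) =>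
      (Pi.single (⟨i', j'⟩ : Σ i, Fin (κ i)) (1:F) : (Σ i, Fin (κ i)) → F) ⟨i, j₀⟩)
      = (0 : Fin (κ i) → F) := by
  funext j₀
  rw [Pi.single_apply, if_neg, Pi.zero_apply]
  intro hx
  exact h (congrArg Sigma.fst hx).symm

theorem single_block_eq (i : Fin n) (j' : Fin (κ i)) :
    (fun j₀ : Fin (κ i) =>
      (Pi.single (⟨i, j'⟩ : Σ i, Fin (κ i)) (1:F) : (Σ i, Fin (κ i)) → F) ⟨i, j₀⟩)
      = Pi.single j' 1 := by
  funext j₀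
  simp [Pi.single_apply, Sigma.mk.inj_iff]

theorem polyAct_repSigma_X (g : G) (i' : Fin n) (j' : Fin (κ i')) :
    polyAct (repSigma ρ) g (X ⟨i', j'⟩) =
      ∑ j'' : Fin (κ i'), (ρ i' g (Pi.single j'' 1) j') •
        (X (⟨i', j''⟩ : Σ i, Fin (κ i)) : MvPolynomial (Σ i, Fin (κ i)) F) := by
  rw [polyAct_X, ← Finset.univ_sigma_univ, Finset.sum_sigma]
  refine Finset.sum_eq_single_of_mem i' (Finset.mem_univ _) (fun i'' _ hne => ?_) |>.trans ?_
  · refine Finset.sum_eq_zero fun j'' _ => ?_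
    rw [repSigma_apply, single_block_ne i' i'' j'' hne, map_zero]
    simp
  · refine Finset.sum_congr rfl fun j'' _ => ?_
    rw [repSigma_apply, single_block_eq i' j'']

theorem polyAct_inclHom (g : G) (i : Fin n) (f : MvPolynomial (Fin (κ i)) F) :
    polyAct (repSigma ρ) g (inclHom i f) = inclHom i (polyAct (ρ i) g f) := by
  suffices h : (polyAct (repSigma ρ) g).comp (inclHom i)
      = (inclHom (F := F) (κ := κ) i).comp (polyAct (ρ i) g) by
    calc polyAct (repSigma ρ) g (inclHom i f)
        = ((polyAct (repSigma ρ) g).comp (inclHom i)) f := rfl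
      _ = inclHom i (polyAct (ρ i) g f) := by rw [h]; rfl
  apply MvPolynomial.algHom_ext
  intro j
  rw [AlgHom.comp_apply, AlgHom.comp_apply, inclHom_X, polyAct_repSigma_X, polyAct_X, map_sum]
  refine Finset.sum_congr rfl fun j'' _ => ?_
  rw [map_smul, inclHom_X]

theorem polyAct_projHom (g : G) (i : Fin n) (f : MvPolynomial (Σ i, Fin (κ i)) F) :
    polyAct (ρ i) g (projHom i f) = projHom i (polyAct (repSigma ρ) g f) := by
  suffices h : (polyAct (ρ i) g).comp (projHom i)
      = (projHom (F := F) i).comp (polyAct (repSigma ρ) g) by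
    calc polyAct (ρ i) g (projHom i f)
        = ((polyAct (ρ i) g).comp (projHom i)) f := rfl
      _ = projHom i (polyAct (repSigma ρ) g f) := by rw [h]; rfl
  apply MvPolynomial.algHom_ext
  rintro ⟨i', j'⟩
  rw [AlgHom.comp_apply, AlgHom.comp_apply]
  by_cases h : i' = i
  · subst h
    rw [projHom_X_mk_eq, polyAct_repSigma_X, map_sum, polyAct_X]
    refine Finset.sum_congr rfl fun j'' _ => ?_
    rw [map_smul, projHom_X_mk_eq]
  · rw [projHom_X_mk_ne i i' h, map_zero, polyAct_repSigma_X, map_sum]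
    symm
    refine Finset.sum_eq_zero fun j'' _ => ?_
    rw [map_smul, projHom_X_mk_ne i i' h, smul_zero]

theorem inclHom_mem_invRing {i : Fin n} {f : MvPolynomial (Fin (κ i)) F}
    (hf : f ∈ invRing (ρ i)) : inclHom i f ∈ invRing (repSigma ρ) := by
  rw [mem_invRing] at hf ⊢
  intro g
  rw [polyAct_inclHom, hf g]

theorem projHom_mem_invRing {i : Fin n} {f : MvPolynomial (Σ i, Fin (κ i)) F}
    (hf : f ∈ invRing (repSigma ρ)) : projHom i f ∈ invRing (ρ i) := by
  rw [mem_invRing] at hf ⊢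
  intro g
  rw [polyAct_projHom, hf g]

theorem inclHom_mem_homogeneous {i : Fin n} {d : ℕ} {f : MvPolynomial (Fin (κ i)) F}
    (hf : f ∈ homogeneousSubmodule (Fin (κ i)) F d) :
    inclHom i f ∈ homogeneousSubmodule (Σ i, Fin (κ i)) F d := by
  rw [mem_homogeneousSubmodule] at hf ⊢
  exact hf.rename_isHomogeneous

theorem projHom_mem_homogeneous {i : Fin n} {d : ℕ} {f : MvPolynomial (Σ i, Fin (κ i)) F}
    (hf : f ∈ homogeneousSubmodule (Σ i, Fin (κ i)) F d) :
    projHom i f ∈ homogeneousSubmodule (Fin (κ i)) F d := by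
  rw [mem_homogeneousSubmodule] at hf ⊢
  have := hf.aeval (n := 1)
    (fun x : Σ i, Fin (κ i) =>
      (if h : x.1 = i then X (h ▸ x.2) else 0 : MvPolynomial (Fin (κ i)) F)) ?_
  · simpa [projHom, one_mul] using this
  · intro x
    by_cases h : x.1 = i
    · rw [dif_pos h]; exact isHomogeneous_X _ _
    · rw [dif_neg h]; exact isHomogeneous_zero _ _ _

end SigmaMaps
set_option maxHeartbeats 1000000

section Transfer
variable {F : Type*} [Field F] {ι₁ ι₂ : Type*}

theorem map_degAlg_le (φ : MvPolynomial ι₁ F →ₐ[F] MvPolynomial ι₂ F)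
    {S₁ : Subalgebra F (MvPolynomial ι₁ F)} {S₂ : Subalgebra F (MvPolynomial ι₂ F)}
    (hS : ∀ p ∈ S₁, φ p ∈ S₂)
    (hdeg : ∀ (e : ℕ) (p : MvPolynomial ι₁ F), p ∈ homogeneousSubmodule ι₁ F e →
      φ p ∈ homogeneousSubmodule ι₂ F e)
    (d : ℕ) {p : MvPolynomial ι₁ F} (hp : p ∈ degAlg S₁ d) : φ p ∈ degAlg S₂ d := by
  have hle : (degAlg S₁ d).map φ ≤ degAlg S₂ d := by
    rw [degAlg, AlgHom.map_adjoin]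
    apply Algebra.adjoin_le
    rintro y ⟨q, hq, rfl⟩
    apply Algebra.subset_adjoin
    simp only [Set.mem_iUnion, SetLike.mem_coe] at hq ⊢
    obtain ⟨e, he, hq⟩ := hq
    obtain ⟨hq1, hq2⟩ := Submodule.mem_inf.mp hq
    exact ⟨e, he, Submodule.mem_inf.mpr ⟨hS q hq1, hdeg e q hq2⟩⟩
  exact hle ⟨p, hp, rfl⟩

theorem map_toSubmodule_le (φ : MvPolynomial ι₁ F →ₐ[F] MvPolynomial ι₂ F)
    {S₁ : Subalgebra F (MvPolynomial ι₁ F)} {S₂ : Subalgebra F (MvPolynomial ι₂ F)}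
    (hS : ∀ p ∈ S₁, φ p ∈ S₂) :
    Submodule.map φ.toLinearMap (Subalgebra.toSubmodule S₁) ≤ Subalgebra.toSubmodule S₂ := by
  rintro y ⟨q, hq, rfl⟩
  exact hS q hq

end Transfer

open scoped Pointwise

section Products
variable {F : Type*} [Field F] {ιR : Type*}

theorem prod_mem_submodule_prod {α : Type*} [DecidableEq α] (s : Finset α)
    (M : α → Submodule F (MvPolynomial ιR F)) (a : α → MvPolynomial ιR F)
    (h : ∀ i ∈ s, a i ∈ M i) : (∏ i ∈ s, a i) ∈ ∏ i ∈ s, M i := by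
  induction s using Finset.induction_on with
  | empty =>
      simp only [Finset.prod_empty]
      exact Submodule.one_le.mp le_rfl
  | insert b t hns ih =>
      rw [Finset.prod_insert hns, Finset.prod_insert hns]
      exact Submodule.mul_mem_mul (h b (Finset.mem_insert_self b t))
        (ih fun i hi => h i (Finset.mem_insert_of_mem hi))

theorem prod_absorb_le {α : Type*} [DecidableEq α] (T : Subalgebra F (MvPolynomial ιR F))
    (M E : α → Submodule F (MvPolynomial ιR F))
    (hME : ∀ i, M i ≤ Subalgebra.toSubmodule T * E i) (s : Finset α) :
    (∏ i ∈ s, M i) ≤ Subalgebra.toSubmodule T * ∏ i ∈ s, E i := by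
  induction s using Finset.induction_on with
  | empty =>
      simp only [Finset.prod_empty]
      rw [Submodule.mul_one]
      exact Submodule.one_le.mpr (one_mem T)
  | insert b t hns ih =>
      rw [Finset.prod_insert hns, Finset.prod_insert hns]
      calc M b * ∏ i ∈ t, M i
          ≤ (Subalgebra.toSubmodule T * E b) * (Subalgebra.toSubmodule T * ∏ i ∈ t, E i) :=
            mul_le_mul' (hME b) ih
        _ = (Subalgebra.toSubmodule T * Subalgebra.toSubmodule T) *
              (E b * ∏ i ∈ t, E i) := mul_mul_mul_comm _ _ _ _
        _ ≤ Subalgebra.toSubmodule T * (E b * ∏ i ∈ t, E i) :=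
            mul_le_mul' (Submodule.mul_le.mpr fun a ha c hc => T.mul_mem ha hc) le_rfl

theorem prod_span_finset [DecidableEq (MvPolynomial ιR F)] {α : Type*} [DecidableEq α]
    (E : α → Finset (MvPolynomial ιR F)) (s : Finset α) :
    ∏ i ∈ s, Submodule.span F ((E i : Set (MvPolynomial ιR F))) =
      Submodule.span F ((∏ i ∈ s, E i : Finset (MvPolynomial ιR F)) : Set (MvPolynomial ιR F)) := by
  induction s using Finset.induction_on with
  | empty =>
      simp only [Finset.prod_empty, Finset.coe_one]
      exact Submodule.one_eq_span
  | insert b t hns ih =>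
      rw [Finset.prod_insert hns, Finset.prod_insert hns, ih, Submodule.span_mul_span,
        Finset.coe_mul]

end Products

section MainLemmas
variable {F : Type*} [Field F] {G : Type*} [Group G] [Finite G] {n : ℕ} {κ : Fin n → ℕ}
  (ρ : ∀ i, Representation F G (Fin (κ i) → F))

theorem top_le_prod_incl :
    (⊤ : Submodule F (MvPolynomial (Σ i, Fin (κ i)) F)) ≤
      ∏ i : Fin n, Submodule.map (inclHom (F := F) (κ := κ) i).toLinearMap ⊤ := by
  intro f _
  have hf : f = ∑ m ∈ f.support, monomial m (coeff m f) := (support_sum_monomial_coeff f).symm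
  rw [hf]
  apply Submodule.sum_mem
  intro m _
  have h1 : monomial m (coeff m f) = (coeff m f) • monomial m (1 : F) := by
    rw [smul_monomial, smul_eq_mul, mul_one]
  rw [h1]
  apply Submodule.smul_mem
  have h2 : monomial m (1 : F) = ∏ i : Fin n,
      inclHom (F := F) (κ := κ) i (∏ j : Fin (κ i), X j ^ m ⟨i, j⟩) := by
    have h3 : monomial m (1 : F) = ∏ x : Σ i, Fin (κ i), (X x : MvPolynomial _ F) ^ m x := by
      rw [monomial_eq, C_1, one_mul]
      exact Finsupp.prod_fintype _ _ fun x => pow_zero _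
    rw [h3, ← Finset.univ_sigma_univ, Finset.prod_sigma]
    refine Finset.prod_congr rfl fun i _ => ?_
    rw [map_prod]
    exact Finset.prod_congr rfl fun j _ => by rw [map_pow, inclHom_X]
  rw [h2]
  exact prod_mem_submodule_prod _ _ _ fun i _ => ⟨_, trivial, rfl⟩

/-- Abstract combination step: if the image of each block is contained in `TT ⬝ span Eᵢ`,
then everything is contained in `TT ⬝ span (∏ Eᵢ)`. -/
theorem top_le_absorb [DecidableEq (MvPolynomial (Σ i, Fin (κ i)) F)]
    (TT : Subalgebra F (MvPolynomial (Σ i, Fin (κ i)) F))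
    (E : Fin n → Finset (MvPolynomial (Σ i, Fin (κ i)) F))
    (hmapi : ∀ i : Fin n, Submodule.map (inclHom (F := F) (κ := κ) i).toLinearMap ⊤ ≤
      Subalgebra.toSubmodule TT *
        Submodule.span F ((E i : Set (MvPolynomial (Σ i, Fin (κ i)) F)))) :
    (⊤ : Submodule F (MvPolynomial (Σ i, Fin (κ i)) F)) ≤
      Subalgebra.toSubmodule TT *
        Submodule.span F ((∏ i : Fin n, E i : Finset (MvPolynomial (Σ i, Fin (κ i)) F)) :
          Set (MvPolynomial (Σ i, Fin (κ i)) F)) := by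
  refine le_trans top_le_prod_incl (le_trans (prod_absorb_le TT _ _ hmapi Finset.univ) ?_)
  rw [prod_span_finset]

/-- Abstract Reynolds transfer: if the whole ring is generated over `TT ≤ F[V]^G` by `D`, then
the invariant ring is generated over `TT` by the Reynolds images of `D`. -/
theorem fgOver_of_top_le {ι : Type*} [Fintype ι] [DecidableEq ι]
    [DecidableEq (MvPolynomial ι F)]
    (ρ' : Representation F G (ι → F)) (hG : (Nat.card G : F) ≠ 0)
    (TT : Subalgebra F (MvPolynomial ι F)) (hTT : TT ≤ invRing ρ')
    (D : Finset (MvPolynomial ι F))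
    (htop : (⊤ : Submodule F (MvPolynomial ι F)) ≤
      Subalgebra.toSubmodule TT * Submodule.span F (D : Set (MvPolynomial ι F))) :
    fgOver (invRing ρ') TT := by
  refine ⟨D.image (reynolds ρ'), ?_, ?_⟩
  · intro y hy
    simp only [Finset.coe_image, Set.mem_image, Finset.mem_coe] at hy
    obtain ⟨b, _, rfl⟩ := hy
    exact reynolds_mem_invRing ρ' b
  · intro f hf
    have h1 : f ∈ Subalgebra.toSubmodule TT * Submodule.span F (D : Set (MvPolynomial ι F)) :=
      htop trivial
    have h2 : reynolds ρ' f ∈ Subalgebra.toSubmodule TT *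
        Submodule.span F ((D.image (reynolds ρ') : Finset (MvPolynomial ι F)) :
          Set (MvPolynomial ι F)) := by
      refine Submodule.mul_induction_on h1 (fun m hm v hv => ?_) (fun x y hx hy => ?_)
      · rw [reynolds_mul ρ' (hTT hm) v]
        refine Submodule.mul_mem_mul hm ?_
        have hv2 : reynolds ρ' v ∈
            Submodule.map (reynolds ρ') (Submodule.span F (D : Set (MvPolynomial ι F))) :=
          Submodule.mem_map_of_mem hv
        rw [Submodule.map_span] at hv2
        rw [Finset.coe_image]
        exact hv2
      · rw [map_add]
        exact add_mem hx hy
    rw [show f = reynolds ρ' f from (reynolds_of_mem ρ' hG hf).symm]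
    exact h2

theorem fgOver_repSigma (hG : (Nat.card G : F) ≠ 0) (d : ℕ)
    (h : ∀ i, fgOver (invRing (ρ i)) (degAlg (invRing (ρ i)) d)) :
    fgOver (invRing (repSigma ρ)) (degAlg (invRing (repSigma ρ)) d) := by
  letI : DecidableEq (MvPolynomial (Σ i, Fin (κ i)) F) := Classical.decEq _
  have key : ∀ i : Fin n, ∃ D : Finset (MvPolynomial (Fin (κ i)) F),
      (⊤ : Submodule F (MvPolynomial (Fin (κ i)) F)) ≤
        Subalgebra.toSubmodule (degAlg (invRing (ρ i)) d) *
          Submodule.span F (D : Set (MvPolynomial (Fin (κ i)) F)) := by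
    intro i
    letI : DecidableEq (MvPolynomial (Fin (κ i)) F) := Classical.decEq _
    obtain ⟨B, hBS, hB⟩ := h i
    obtain ⟨C, hC⟩ := noether_top_le (ρ i)
    refine ⟨B * C, ?_⟩
    have e1 : Submodule.span F ((B * C : Finset (MvPolynomial (Fin (κ i)) F)) :
        Set (MvPolynomial (Fin (κ i)) F)) =
        Submodule.span F (B : Set (MvPolynomial (Fin (κ i)) F)) *
          Submodule.span F (C : Set (MvPolynomial (Fin (κ i)) F)) := by
      rw [Submodule.span_mul_span, Finset.coe_mul]
    rw [e1, ← mul_assoc]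
    exact le_trans hC (mul_le_mul' hB le_rfl)
  choose D hD using key
  have hmapi : ∀ i : Fin n,
      Submodule.map (inclHom (F := F) (κ := κ) i).toLinearMap ⊤ ≤
        Subalgebra.toSubmodule (degAlg (invRing (repSigma ρ)) d) *
          Submodule.span F (((D i).image (inclHom (F := F) (κ := κ) i) : Finset _) :
            Set (MvPolynomial (Σ i, Fin (κ i)) F)) := by
    intro i
    refine le_trans (Submodule.map_mono (hD i)) ?_
    rw [Submodule.map_mul]
    apply mul_le_mul'
    · rintro y ⟨q, hq, rfl⟩
      exact map_degAlg_le (inclHom i)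
        (fun p hp => inclHom_mem_invRing ρ hp)
        (fun e p hp => inclHom_mem_homogeneous hp) d hq
    · rw [Submodule.map_span, Finset.coe_image]
      exact le_of_eq (congrArg _ rfl)
  have htop := top_le_absorb (degAlg (invRing (repSigma ρ)) d)
    (fun i => (D i).image (inclHom (F := F) (κ := κ) i)) hmapi
  exact fgOver_of_top_le (repSigma ρ) hG _ (degAlg_le_self _ d) _ htop

end MainLemmas

section Easy
variable {F : Type*} [Field F] {G : Type*} [Group G] {n : ℕ} {κ : Fin n → ℕ}
  (ρ : ∀ i, Representation F G (Fin (κ i) → F))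

theorem fgOver_proj (d : ℕ)
    (h : fgOver (invRing (repSigma ρ)) (degAlg (invRing (repSigma ρ)) d)) (i : Fin n) :
    fgOver (invRing (ρ i)) (degAlg (invRing (ρ i)) d) := by
  classical
  obtain ⟨B, hBS, hB⟩ := h
  refine ⟨B.image (projHom (F := F) i), ?_, ?_⟩
  · intro y hy
    simp only [Finset.coe_image, Set.mem_image, Finset.mem_coe] at hy
    obtain ⟨b, hb, rfl⟩ := hy
    exact projHom_mem_invRing ρ (hBS hb)
  · intro f hf
    have h1 : inclHom (F := F) (κ := κ) i f ∈
        Subalgebra.toSubmodule (invRing (repSigma ρ)) := inclHom_mem_invRing ρ hf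
    have h2 := hB h1
    have h3 : projHom (F := F) i (inclHom (F := F) (κ := κ) i f) ∈
        Submodule.map (projHom (F := F) i).toLinearMap
          (Subalgebra.toSubmodule (degAlg (invRing (repSigma ρ)) d) *
            Submodule.span F ((B : Set (MvPolynomial (Σ i, Fin (κ i)) F)))) :=
      Submodule.mem_map_of_mem h2
    rw [projHom_inclHom, Submodule.map_mul, Submodule.map_span] at h3
    have h4 : Submodule.map (projHom (F := F) i).toLinearMap
          (Subalgebra.toSubmodule (degAlg (invRing (repSigma ρ)) d)) *
        Submodule.span F ((projHom (F := F) i) '' (B : Set (MvPolynomial (Σ i, Fin (κ i)) F))) ≤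
        Subalgebra.toSubmodule (degAlg (invRing (ρ i)) d) *
          Submodule.span F ((B.image (projHom (F := F) i) : Finset _) : Set _) := by
      apply mul_le_mul'
      · rintro y ⟨q, hq, rfl⟩
        exact map_degAlg_le (projHom i)
          (fun p hp => projHom_mem_invRing ρ hp)
          (fun e p hp => projHom_mem_homogeneous hp) d hq
      · rw [Finset.coe_image]
    exact h4 h3

end Easy
/-- For `G`-modules `V_1, …, V_n` and `W = V_1 ⊕ ⋯ ⊕ V_n`,
`σ(G, W) = max_i σ(G, V_i)`. -/
theorem sigmaAlg_repSigma {F : Type*} [Field F] {G : Type*} [Group G] [Finite G]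
    (hG : (Nat.card G : F) ≠ 0) (n : ℕ) (κ : Fin n → ℕ)
    (ρ : ∀ i, Representation F G (Fin (κ i) → F)) :
    sigmaAlg (invRing (repSigma ρ)) = Finset.univ.sup (fun i => sigmaAlg (invRing (ρ i))) := by
  have hNW : fgOver (invRing (repSigma ρ)) (degAlg (invRing (repSigma ρ))
      (Finset.univ.sup (fun i => sigmaAlg (invRing (ρ i))))) := by
    apply fgOver_repSigma ρ hG
    intro i
    have h1 : fgOver (invRing (ρ i)) (degAlg (invRing (ρ i)) (sigmaAlg (invRing (ρ i)))) := by
      rw [sigmaAlg_def]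
      exact Nat.sInf_mem (exists_fgOver_degAlg (ρ i))
    exact fgOver_mono (degAlg_mono _
      (Finset.le_sup (f := fun i => sigmaAlg (invRing (ρ i))) (Finset.mem_univ i))) h1
  apply le_antisymm
  · rw [sigmaAlg_def]
    exact Nat.sInf_le hNW
  · apply Finset.sup_le
    intro i _
    have h2 : fgOver (invRing (repSigma ρ)) (degAlg (invRing (repSigma ρ))
        (sigmaAlg (invRing (repSigma ρ)))) := by
      rw [sigmaAlg_def]
      refine Nat.sInf_mem (s := {d : ℕ | fgOver (invRing (repSigma ρ)) (degAlg (invRing (repSigma ρ)) d)})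
        ⟨Finset.univ.sup (fun i => sigmaAlg (invRing (ρ i))), hNW⟩
    have h3 := fgOver_proj ρ _ h2 i
    rw [sigmaAlg_def (invRing (ρ i)), sigmaAlg_def (invRing (repSigma ρ))]
    exact Nat.sInf_le h3
end
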